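/- arXiv:2105.04330 — 2 statements merged into one kernel-verified Lean document; each statement's English description precedes it below -/
import Mathlib

section
/- Let m_r ≥ 2, λ₀, λ ∈ (−1,1), and σ², σ₀² > 0. If (m_r − 1 + λ)² σ₀² = σ² (m_r − 1 + λ₀)² and (m_s − 1 + λ)² σ₀² = σ² (m_s − 1 + λ₀)² for integers m_r ≠ m_s both ≥ 2, then λ = λ₀ and σ² = σ₀². -/
theorem identification_within_variance (mr ms : ℕ) (hmr : 2 ≤ mr) (hms : 2 ≤ ms)
    (hne : mr ≠ ms) (lam lam0 : ℝ)
    (hlam : lam ∈ Set.Ioo (-1 : ℝ) 1) (hlam0 : lam0 ∈ Set.Ioo (-1 : ℝ) 1)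
    (s2 s02 : ℝ) (hs2 : 0 < s2) (hs02 : 0 < s02)
    (h1 : ((mr : ℝ) - 1 + lam) ^ 2 * s02 = s2 * ((mr : ℝ) - 1 + lam0) ^ 2)
    (h2 : ((ms : ℝ) - 1 + lam) ^ 2 * s02 = s2 * ((ms : ℝ) - 1 + lam0) ^ 2) :
    lam = lam0 ∧ s2 = s02 := by
  obtain ⟨hl1, hl2⟩ := hlam
  obtain ⟨hl01, hl02⟩ := hlam0
  have hmr' : (2 : ℝ) ≤ (mr : ℝ) := by exact_mod_cast hmr
  have hms' : (2 : ℝ) ≤ (ms : ℝ) := by exact_mod_cast hms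
  have ha : 0 < (mr : ℝ) - 1 + lam := by linarith
  have hb : 0 < (ms : ℝ) - 1 + lam := by linarith
  have ha0 : 0 < (mr : ℝ) - 1 + lam0 := by linarith
  have hb0 : 0 < (ms : ℝ) - 1 + lam0 := by linarith
  have hsq : s02 * ((((mr : ℝ) - 1 + lam) * ((ms : ℝ) - 1 + lam0)) ^ 2)
      = s02 * ((((ms : ℝ) - 1 + lam) * ((mr : ℝ) - 1 + lam0)) ^ 2) := by
    linear_combination ((ms : ℝ) - 1 + lam0) ^ 2 * h1 - ((mr : ℝ) - 1 + lam0) ^ 2 * h2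
  have hsq' : (((mr : ℝ) - 1 + lam) * ((ms : ℝ) - 1 + lam0)) ^ 2
      = (((ms : ℝ) - 1 + lam) * ((mr : ℝ) - 1 + lam0)) ^ 2 :=
    mul_left_cancel₀ (ne_of_gt hs02) hsq
  have key : ((mr : ℝ) - 1 + lam) * ((ms : ℝ) - 1 + lam0)
      = ((ms : ℝ) - 1 + lam) * ((mr : ℝ) - 1 + lam0) :=
    pow_left_inj₀ (le_of_lt (mul_pos ha hb0)) (le_of_lt (mul_pos hb ha0)) two_ne_zero |>.mp hsq'
  have hmne : (mr : ℝ) ≠ (ms : ℝ) := by exact_mod_cast hne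
  have hll : lam = lam0 := by
    have h0 : ((mr : ℝ) - (ms : ℝ)) * (lam - lam0) = 0 := by linear_combination -key
    rcases mul_eq_zero.1 h0 with h | h
    · exact absurd (by linarith [sub_eq_zero.1 h] : (mr : ℝ) = (ms : ℝ)) hmne
    · linarith [sub_eq_zero.1 h]
  refine ⟨hll, ?_⟩
  subst hll
  have hA2 : ((mr : ℝ) - 1 + lam) ^ 2 ≠ 0 := pow_ne_zero _ (ne_of_gt ha)
  have h1' : s2 * ((mr : ℝ) - 1 + lam) ^ 2 = s02 * ((mr : ℝ) - 1 + lam) ^ 2 := by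
    linear_combination -h1
  exact mul_right_cancel₀ hA2 h1'
end

section
/- Let Y_r ∈ ℝ^m solve Y_r = λ W_m Y_r + α ι_m + ε_r with m ≥ 2, λ ∈ (−1,1), W_m = (1/(m−1))(ι_m ι_m' − I_m). Let ȳ = (1/m)ι_m'Y_r, ε̄ = (1/m)ι_m'ε_r, Ÿ_r = Y_r − ȳ ι_m, ε̈_r = ε_r − ε̄ ι_m. Then ȳ = (α + ε̄)/(1 − λ) and Ÿ_r = ((m−1)/(m−1+λ))·ε̈_r. -/
open Matrix

theorem reduced_form_decomposition (m : ℕ) (hm : 2 ≤ m) (lam : ℝ)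
    (hlam : lam ∈ Set.Ioo (-1 : ℝ) 1)
    (J : Matrix (Fin m) (Fin m) ℝ) (hJ : J = Matrix.of fun _ _ => (1 : ℝ))
    (W : Matrix (Fin m) (Fin m) ℝ)
    (hW : W = (1 / ((m : ℝ) - 1)) • (J - 1))
    (α : ℝ) (Y ε : Fin m → ℝ)
    (hY : Y = lam • W.mulVec Y + (fun _ => α) + ε)
    (ybar εbar : ℝ)
    (hybar : ybar = (1 / (m : ℝ)) * ∑ i, Y i)
    (hεbar : εbar = (1 / (m : ℝ)) * ∑ i, ε i) :
    ybar = (α + εbar) / (1 - lam) ∧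
    ∀ i, Y i - ybar = (((m : ℝ) - 1) / ((m : ℝ) - 1 + lam)) * (ε i - εbar) := by
  obtain ⟨hl1, hl2⟩ := hlam
  have hm2 : (2:ℝ) ≤ (m:ℝ) := by exact_mod_cast hm
  have hm1 : (m:ℝ) - 1 ≠ 0 := by linarith
  have hm0 : (m:ℝ) ≠ 0 := by linarith
  have hden : (m:ℝ) - 1 + lam ≠ 0 := by nlinarith
  have h1l : (1:ℝ) - lam ≠ 0 := by nlinarith
  have hpt : ∀ i, ((m:ℝ)-1) * Y i = lam * ((∑ j, Y j) - Y i) + ((m:ℝ)-1) * (α + ε i) := by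
    intro i
    have h := congrFun hY i
    have hW' : W.mulVec Y i = (1 / ((m:ℝ)-1)) * ((∑ j, Y j) - Y i) := by
      simp [hW, hJ, Matrix.mulVec, dotProduct, Matrix.one_apply, sub_mul,
        Finset.sum_sub_distrib, Finset.mul_sum, mul_sub]
    rw [Pi.add_apply, Pi.add_apply, Pi.smul_apply, smul_eq_mul, hW'] at h
    field_simp at h
    linarith [h]
  have hS : (1 - lam) * (∑ j, Y j) = (m:ℝ) * α + ∑ j, ε j := by
    have hsum : ∑ i, (((m:ℝ)-1) * Y i)
        = ∑ i, (lam * ((∑ j, Y j) - Y i) + ((m:ℝ)-1) * (α + ε i)) :=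
      Finset.sum_congr rfl (fun i _ => hpt i)
    simp only [Finset.sum_add_distrib, ← Finset.mul_sum, Finset.sum_sub_distrib,
      Finset.sum_const, Finset.card_univ, Fintype.card_fin, nsmul_eq_mul, mul_add,
      mul_sub] at hsum
    have h2 : ((m:ℝ)-1) * ((1 - lam) * ∑ j, Y j)
        = ((m:ℝ)-1) * ((m:ℝ) * α + ∑ j, ε j) := by linear_combination hsum
    exact mul_left_cancel₀ hm1 h2
  constructor
  · rw [hybar, hεbar, eq_div_iff h1l]
    field_simp
    linarith [hS]
  · intro i
    have h := hpt i
    rw [hybar, hεbar]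
    field_simp
    linear_combination (m:ℝ) * h - ((m:ℝ)-1)*hS
end
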